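/- Let F_q be a finite field of characteristic 2 and n ≥ 1 an integer. Write n+1 = 2^r·(m+1) with r ≥ 0 and m+1 odd. Then m is even, E_n(X) = E_m(X)^{2^r} · X^{2^r − 1}, and moreover E_m(X) = ∏_{i=1}^{m/2} (X − (θ^i + θ^{−i}))² over an algebraic closure of F_q, where θ is a primitive (m+1)-th root of unity in that closure. -/
import Mathlib
open Polynomial

private theorem Epoly_eval' {K : Type*} [CommRing K] (y z : K) (h : y * z = 1) :
    ∀ m : ℕ, (y - z) * (dickson 2 (1:K) m).eval (y + z) = y ^ (m+1) - z ^ (m+1) := by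
  have key : ∀ m : ℕ,
      ((y - z) * (dickson 2 (1:K) m).eval (y + z) = y ^ (m+1) - z ^ (m+1)) ∧
      ((y - z) * (dickson 2 (1:K) (m+1)).eval (y + z) = y ^ (m+2) - z ^ (m+2)) := by
    intro m
    induction m with
    | zero =>
      constructor
      · simp [dickson_zero]; ring
      · simp [dickson_one]; ring
    | succ n ih =>
      obtain ⟨ih0, ih1⟩ := ih
      refine ⟨ih1, ?_⟩
      rw [dickson_add_two]
      simp only [eval_sub, eval_mul, eval_X, C_1, eval_one, one_mul]
      linear_combination (y + z) * ih1 - ih0 + (y^(n+1) - z^(n+1)) * h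
  exact fun m => (key m).1

private theorem Emonic' {K : Type*} [CommRing K] [Nontrivial K] :
    ∀ m : ℕ, (dickson 2 (1:K) m).Monic ∧ (dickson 2 (1:K) m).natDegree = m := by
  have key : ∀ m : ℕ,
      ((dickson 2 (1:K) m).Monic ∧ (dickson 2 (1:K) m).natDegree = m) ∧
      ((dickson 2 (1:K) (m+1)).Monic ∧ (dickson 2 (1:K) (m+1)).natDegree = m+1) := by
    intro m
    induction m with
    | zero =>
      have h0 : dickson 2 (1:K) 0 = 1 := by rw [dickson_zero]; norm_num
      refine ⟨⟨?_, ?_⟩, ⟨?_, ?_⟩⟩ <;> simp [h0, dickson_one, monic_X, monic_one]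
    | succ n ih =>
      obtain ⟨⟨h0m, h0d⟩, ⟨h1m, h1d⟩⟩ := ih
      have hXd : (X * dickson 2 (1:K) (n+1)).natDegree = n + 2 := by
        rw [natDegree_X_mul h1m.ne_zero, h1d]
      have hXm : (X * dickson 2 (1:K) (n+1)).Monic := monic_X.mul h1m
      have hlt : (dickson 2 (1:K) n).natDegree < (X * dickson 2 (1:K) (n+1)).natDegree := by
        rw [hXd, h0d]; omega
      refine ⟨⟨h1m, h1d⟩, ?_, ?_⟩
      all_goals rw [dickson_add_two, C_1, one_mul]
      · exact hXm.sub_of_left (degree_lt_degree hlt)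
      · rw [natDegree_sub_eq_left_of_natDegree_lt hlt, hXd]
  exact fun m => (key m).1

private theorem Edbl' {R : Type*} [CommRing R] [CharP R 2] :
    ∀ k : ℕ, (dickson 2 (1:R) (2*k+1) = X * (dickson 2 (1:R) k)^2) ∧
      (dickson 2 (1:R) (2*k+2) = (dickson 2 (1:R) (k+1))^2 + (dickson 2 (1:R) k)^2) := by
  have h2 : (2 : R[X]) = 0 := by
    rw [← map_ofNat (C : R →+* R[X]) 2, CharTwo.two_eq_zero, map_zero]
  intro k
  induction k with
  | zero =>
    constructor
    · have h0 : dickson 2 (1:R) 0 = 1 := by rw [dickson_zero]; norm_num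
      simp [dickson_one, h0]
    · have : (2:ℕ) = 0 + 2 := by norm_num
      rw [this, dickson_add_two, dickson_one, dickson_zero, C_1, one_mul]
      norm_num
      linear_combination (-1 : R[X]) * h2
  | succ n ih =>
    obtain ⟨ih0, ih1⟩ := ih
    have e1 : 2*(n+1)+1 = (2*n+1)+2 := by omega
    have e2 : 2*(n+1)+2 = (2*n+2)+2 := by omega
    constructor
    · rw [e1, dickson_add_two, C_1, one_mul, ih0, show 2*n+1+1 = 2*n+2 from rfl, ih1]
      ring
    · rw [e2, dickson_add_two, C_1, one_mul, show 2*n+2+1 = 2*(n+1)+1 from by omega,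
        e1, dickson_add_two, C_1, one_mul, ih0,
        show 2*n+1+1 = 2*n+2 from rfl, ih1,
        show n+1+1 = n+2 from rfl, dickson_add_two, C_1, one_mul]
      linear_combination (X * dickson 2 (1:R) (n+1) * dickson 2 (1:R) n
        - (dickson 2 (1:R) (n+1))^2 - (dickson 2 (1:R) n)^2) * h2

private theorem Epow' {R : Type*} [CommRing R] [CharP R 2] (m : ℕ) :
    ∀ r : ℕ, dickson 2 (1:R) (2^r * (m+1) - 1)
      = (dickson 2 (1:R) m)^(2^r) * X^(2^r - 1) := by
  intro r
  induction r with
  | zero => simp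
  | succ r ih =>
    have hp : 1 ≤ 2^r := Nat.one_le_two_pow
    set k := 2^r * (m+1) - 1 with hk
    have h1 : 1 ≤ 2^r * (m+1) := Nat.mul_pos (by positivity) (by omega)
    have hk1 : k + 1 = 2^r * (m+1) := by omega
    have hn : 2^(r+1) * (m+1) - 1 = 2*k + 1 := by
      have : 2^(r+1) * (m+1) = 2 * (2^r * (m+1)) := by ring
      omega
    rw [hn, (Edbl' k).1, ih, mul_pow, ← pow_mul, ← pow_mul]
    have e1 : 2^r * 2 = 2^(r+1) := by rw [pow_succ]
    have e2 : (2^r - 1) * 2 + 1 = 2^(r+1) - 1 := by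
      have : 2^(r+1) = 2^r * 2 := by rw [pow_succ]
      omega
    rw [e1, ← e2, pow_succ]
    ring

/-- Bhargava–Zieve factorization of `E_n` (Dickson, second kind, parameter 1)
in characteristic 2, general case `n + 1 = 2^r (m+1)` with `m+1` odd. -/
theorem stmt_17 (F : Type*) [Field F] [Fintype F] [CharP F 2]
    (n m r : ℕ) (hn : 1 ≤ n) (hnm : n + 1 = 2 ^ r * (m + 1))
    (hm : Odd (m + 1))
    (θ : AlgebraicClosure F) (hθ : IsPrimitiveRoot θ (m + 1)) :
    Even m ∧
    Polynomial.dickson 2 (1 : F) n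
      = (Polynomial.dickson 2 (1 : F) m) ^ (2 ^ r)
          * Polynomial.X ^ (2 ^ r - 1) ∧
    (Polynomial.dickson 2 (1 : F) m).map (algebraMap F (AlgebraicClosure F))
      = ∏ i ∈ Finset.Icc 1 (m / 2),
          (Polynomial.X - Polynomial.C (θ ^ i + θ⁻¹ ^ i)) ^ 2 := by
  obtain ⟨t, ht⟩ := hm
  have hEven : Even m := ⟨t, by omega⟩
  refine ⟨hEven, ?_, ?_⟩
  · have hn' : n = 2^r * (m+1) - 1 := by omega
    rw [hn']
    exact Epow' m r
  · have hmap : (dickson 2 (1:F) m).map (algebraMap F (AlgebraicClosure F)) = dickson 2 (1:(AlgebraicClosure F)) m := by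
      rw [map_dickson, map_one]
    rw [hmap]
    set k := m / 2 with hkdef
    have hm2 : m = 2 * k := by omega
    rcases Nat.eq_zero_or_pos k with hk0 | hkpos
    · rw [hk0] at hm2 ⊢
      subst hm2
      rw [dickson_zero]
      norm_num
    -- main case : m = 2k, k ≥ 1
    have hθne : θ ≠ 0 := by
      intro h0
      have := hθ.pow_eq_one
      rw [h0, zero_pow (by omega : m + 1 ≠ 0)] at this
      exact zero_ne_one this
    set c : ℕ → (AlgebraicClosure F) := fun i => θ ^ i + θ⁻¹ ^ i with hc
    set W : (AlgebraicClosure F)[X] := dickson 2 (1:(AlgebraicClosure F)) k + dickson 2 (1:(AlgebraicClosure F)) (k-1) with hW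
    have h2K : (2 : (AlgebraicClosure F)[X]) = 0 := by
      rw [← map_ofNat (C : (AlgebraicClosure F) →+* (AlgebraicClosure F)[X]) 2, CharTwo.two_eq_zero, map_zero]
    have hsq : dickson 2 (1:(AlgebraicClosure F)) m = W ^ 2 := by
      have := (Edbl' (R := AlgebraicClosure F) (k-1)).2
      rw [show 2*(k-1)+2 = m from by omega, show k-1+1 = k from by omega] at this
      rw [this, hW]
      linear_combination (- dickson 2 (1:(AlgebraicClosure F)) k * dickson 2 (1:(AlgebraicClosure F)) (k-1)) * h2K
    -- roots
    have hroot : ∀ i ∈ Finset.Icc 1 k, W.eval (c i) = 0 := by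
      intro i hi
      rw [Finset.mem_Icc] at hi
      have hyz : θ ^ i * θ⁻¹ ^ i = 1 := by
        rw [inv_pow, mul_inv_cancel₀ (pow_ne_zero _ hθne)]
      have hy1 : (θ ^ i) ^ (m+1) = 1 := by
        rw [← pow_mul, mul_comm, pow_mul, hθ.pow_eq_one, one_pow]
      have hz1 : (θ⁻¹ ^ i) ^ (m+1) = 1 := by
        rw [inv_pow, inv_pow, hy1, inv_one]
      have hne : θ ^ i ≠ θ⁻¹ ^ i := by
        intro he
        have h2i : θ ^ (2*i) = 1 := by
          rw [two_mul, pow_add]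
          nth_rewrite 2 [he]
          exact hyz
        have := (hθ.pow_eq_one_iff_dvd _).1 h2i
        have := Nat.le_of_dvd (by omega) this
        omega
      have hEm : (dickson 2 (1:(AlgebraicClosure F)) m).eval (c i) = 0 := by
        have key := Epoly_eval' (θ ^ i) (θ⁻¹ ^ i) hyz m
        rw [hy1, hz1, sub_self] at key
        rcases mul_eq_zero.1 key with h | h
        · exact absurd (sub_eq_zero.1 h) hne
        · exact h
      have : W.eval (c i) ^ 2 = 0 := by
        rw [← eval_pow, ← hsq, hEm]
      exact pow_eq_zero_iff (by norm_num) |>.1 this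
    -- injectivity
    have hinj : ∀ i ∈ Finset.Icc 1 k, ∀ j ∈ Finset.Icc 1 k, c i = c j → i = j := by
      intro i hi j hj hij
      rw [Finset.mem_Icc] at hi hj
      have ha : θ ^ i * (θ ^ i)⁻¹ = 1 := mul_inv_cancel₀ (pow_ne_zero _ hθne)
      have hb : θ ^ j * (θ ^ j)⁻¹ = 1 := mul_inv_cancel₀ (pow_ne_zero _ hθne)
      have hcij : θ ^ i + (θ ^ i)⁻¹ = θ ^ j + (θ ^ j)⁻¹ := by
        have := hij
        simp only [hc, inv_pow] at this
        exact this
      have hfact : (θ ^ i - θ ^ j) * (θ ^ i * θ ^ j - 1) = 0 := by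
        linear_combination (θ ^ i * θ ^ j) * hcij - θ ^ j * ha + θ ^ i * hb
      rcases mul_eq_zero.1 hfact with h | h
      · exact hθ.pow_inj (by omega) (by omega) (sub_eq_zero.1 h)
      · exfalso
        have hsum : θ ^ (i + j) = 1 := by rw [pow_add]; linear_combination h
        have := Nat.le_of_dvd (by omega) ((hθ.pow_eq_one_iff_dvd _).1 hsum)
        omega
    -- W = ∏ (X - C (c i))
    have Wmonic : W.Monic := by
      have h1 := Emonic' (K := AlgebraicClosure F) k
      have h0 := Emonic' (K := AlgebraicClosure F) (k-1)
      exact h1.1.add_of_left (degree_lt_degree (by rw [h0.2, h1.2]; omega))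
    have WnatDeg : W.natDegree = k := by
      have h1 := Emonic' (K := AlgebraicClosure F) k
      have h0 := Emonic' (K := AlgebraicClosure F) (k-1)
      rw [hW, natDegree_add_eq_left_of_natDegree_lt (by rw [h0.2, h1.2]; omega), h1.2]
    have hWne : W ≠ 0 := Wmonic.ne_zero
    set s : Multiset (AlgebraicClosure F) := (Finset.Icc 1 k).val.map c with hs
    have hsnodup : s.Nodup := Multiset.Nodup.map_on
      (fun i hi j hj => hinj i hi j hj) (Finset.Icc 1 k).nodup
    have hsle : s ≤ W.roots := by
      rw [Multiset.le_iff_subset hsnodup]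
      intro x hx
      rw [hs, Multiset.mem_map] at hx
      obtain ⟨i, hi, rfl⟩ := hx
      rw [mem_roots hWne]
      exact hroot i hi
    have hdvd : (s.map fun a => X - C a).prod ∣ W :=
      (Multiset.prod_X_sub_C_dvd_iff_le_roots hWne s).2 hsle
    have hProdDef : (s.map fun a => X - C a).prod
        = ∏ i ∈ Finset.Icc 1 k, (X - C (c i)) := by
      rw [hs, Multiset.map_map, Finset.prod_eq_multiset_prod]
      rfl
    set P : (AlgebraicClosure F)[X] := ∏ i ∈ Finset.Icc 1 k, (X - C (c i)) with hP
    have Pmonic : P.Monic := monic_prod_of_monic _ _ (fun i _ => monic_X_sub_C (c i))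
    have PnatDeg : P.natDegree = k := by
      rw [hP, natDegree_prod _ _ (fun i _ => X_sub_C_ne_zero (c i))]
      simp [natDegree_X_sub_C]
    have hPdvd : P ∣ W := hProdDef ▸ hdvd
    have hWP : W = P := by
      obtain ⟨u, hu⟩ := hPdvd
      have hune : u ≠ 0 := by
        intro h; rw [h, mul_zero] at hu; exact hWne hu
      have hud : u.natDegree = 0 := by
        have := natDegree_mul Pmonic.ne_zero hune
        rw [← hu, WnatDeg, PnatDeg] at this
        omega
      have hum : u.Monic := by
        have : W.leadingCoeff = P.leadingCoeff * u.leadingCoeff := by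
          rw [hu, leadingCoeff_mul]
        rw [Wmonic.leadingCoeff, Pmonic.leadingCoeff, one_mul] at this
        exact this.symm
      rw [hu, hum.natDegree_eq_zero.1 hud, mul_one]
    rw [hsq, hWP, hP, ← Finset.prod_pow]
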